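/- Let L > 0, V > 0 and β ∈ (0,1). Let h_n : [0,L] → [0,∞) be integrable functions with ‖h_n‖_{L¹} < V converging in L¹([0,L]) to an integrable function h : [0,L] → [0,∞) with ‖h‖_{L¹} = V. Set λ_n := (V − ‖h_n‖_{L¹})^β, H_n := {x ∈ [0,L] : h_n(x) ≥ λ_n}, and μ_n := |H_n| + (1/λ_n) ∫_{[0,L] \ H_n} h_n dx. Then μ_n > 0 for all sufficiently large n, and the numbers ε_n := (V − ‖h_n‖_{L¹})/μ_n satisfy ε_n → 0 and ε_n/λ_n → 0 as n → ∞. -/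

import Mathlib

open MeasureTheory Filter

/-- Let `L > 0`, `V > 0`, `β ∈ (0,1)`.  Let `h_n : [0,L] → [0,∞)` be integrable with
`‖h_n‖_{L¹} < V`, converging in `L¹` to `h` with `‖h‖_{L¹} = V`.  With
`λ_n = (V − ‖h_n‖)^β`, `H_n = {h_n ≥ λ_n}`, `μ_n = |H_n| + (1/λ_n)∫_{[0,L]\H_n} h_n`,
one has `μ_n > 0` for large `n`, and `ε_n = (V − ‖h_n‖)/μ_n` satisfies `ε_n → 0`
and `ε_n/λ_n → 0`. -/
theorem stmt6 (L V β : ℝ) (hL : 0 < L) (hV : 0 < V) (hβ0 : 0 < β) (hβ1 : β < 1)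
    (hn : ℕ → ℝ → ℝ) (h : ℝ → ℝ)
    (hmeas : ∀ n, Measurable (hn n))
    (hint : ∀ n, IntegrableOn (hn n) (Set.Icc 0 L))
    (hnonneg : ∀ n, ∀ x ∈ Set.Icc (0 : ℝ) L, 0 ≤ hn n x)
    (hhint : IntegrableOn h (Set.Icc 0 L))
    (hhnonneg : ∀ x ∈ Set.Icc (0 : ℝ) L, 0 ≤ h x)
    (hlt : ∀ n, (∫ x in Set.Icc (0 : ℝ) L, hn n x) < V)
    (hnorm : (∫ x in Set.Icc (0 : ℝ) L, h x) = V)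
    (hconv : Tendsto (fun n => ∫ x in Set.Icc (0 : ℝ) L, |hn n x - h x|) atTop (nhds 0)) :
    let lam : ℕ → ℝ := fun n => (V - ∫ x in Set.Icc (0 : ℝ) L, hn n x) ^ β
    let Hn : ℕ → Set ℝ := fun n => {x ∈ Set.Icc (0 : ℝ) L | lam n ≤ hn n x}
    let μn : ℕ → ℝ := fun n =>
      (volume (Hn n)).toReal + (1 / lam n) * ∫ x in Set.Icc (0 : ℝ) L \ Hn n, hn n x
    let εn : ℕ → ℝ := fun n => (V - ∫ x in Set.Icc (0 : ℝ) L, hn n x) / μn n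
    (∀ᶠ n in atTop, 0 < μn n) ∧
      Tendsto εn atTop (nhds 0) ∧ Tendsto (fun n => εn n / lam n) atTop (nhds 0) := by
  intro lam Hn μn εn
  -- notation
  set I : ℕ → ℝ := fun n => ∫ x in Set.Icc (0 : ℝ) L, hn n x with hIdef
  have hδpos : ∀ n, 0 < V - I n := fun n => sub_pos.2 (hlt n)
  -- `I n → V`
  have hItend : Tendsto I atTop (nhds V) := by
    have key : ∀ n, ‖I n - V‖ ≤ ∫ x in Set.Icc (0 : ℝ) L, |hn n x - h x| := by
      intro n
      have h1 : I n - V = ∫ x in Set.Icc (0 : ℝ) L, (hn n x - h x) := by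
        rw [integral_sub (hint n) hhint, hnorm]
      calc ‖I n - V‖ = ‖∫ x in Set.Icc (0 : ℝ) L, (hn n x - h x)‖ := by rw [h1]
        _ ≤ ∫ x in Set.Icc (0 : ℝ) L, ‖hn n x - h x‖ := norm_integral_le_integral_norm _
        _ = ∫ x in Set.Icc (0 : ℝ) L, |hn n x - h x| := by
            simp only [Real.norm_eq_abs]
    have h0 : Tendsto (fun n => I n - V) atTop (nhds 0) := squeeze_zero_norm key hconv
    have := h0.add_const V
    simpa using this
  have hδtend : Tendsto (fun n => V - I n) atTop (nhds 0) := by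
    have := (tendsto_const_nhds (x := V) (f := atTop)).sub hItend
    simpa using this
  have hlam_pos : ∀ n, 0 < lam n := fun n => Real.rpow_pos_of_pos (hδpos n) β
  have h1mβ : 0 < 1 - β := by linarith
  have hδpow : Tendsto (fun n => (V - I n) ^ (1 - β)) atTop (nhds 0) := by
    have c := (Real.continuousAt_rpow_const 0 (1 - β) (Or.inr h1mβ.le)).tendsto
    have := c.comp hδtend
    simpa [Function.comp_def, Real.zero_rpow h1mβ.ne'] using this
  -- measurability and basic facts about `Hn`
  have hHmeas : ∀ n, MeasurableSet (Hn n) := fun n =>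
    (measurableSet_Icc.inter (measurableSet_le measurable_const (hmeas n)) :
      MeasurableSet (Set.Icc (0 : ℝ) L ∩ {x | lam n ≤ hn n x}))
  have hHsub : ∀ n, Hn n ⊆ Set.Icc (0 : ℝ) L := fun n x hx => hx.1
  have hHfin : ∀ n, volume (Hn n) ≠ ⊤ := fun n =>
    ((measure_mono (hHsub n)).trans_lt isCompact_Icc.measure_lt_top).ne
  have hJnonneg : ∀ n, 0 ≤ ∫ x in Set.Icc (0 : ℝ) L \ Hn n, hn n x := fun n =>
    setIntegral_nonneg (measurableSet_Icc.diff (hHmeas n)) (fun x hx => hnonneg n x hx.1)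
  have hμnonneg : ∀ n, 0 ≤ μn n := fun n =>
    add_nonneg ENNReal.toReal_nonneg
      (mul_nonneg (one_div_nonneg.2 (hlam_pos n).le) (hJnonneg n))
  have hsplit : ∀ n, I n = (∫ x in Hn n, hn n x) + ∫ x in Set.Icc (0 : ℝ) L \ Hn n, hn n x := by
    intro n
    have := integral_diff (hHmeas n) (hint n) (hHsub n) (f := hn n) (μ := volume)
    simp only [hIdef]
    linarith
  -- absolute continuity of the integral of `h`
  have hfin : (∫⁻ x in Set.Icc (0 : ℝ) L, ENNReal.ofReal (h x)) ≠ ⊤ := by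
    have h2 := hhint.2

    refine ne_of_lt (lt_of_le_of_lt (lintegral_mono fun x => ?_) h2)
    exact Real.ofReal_le_enorm _
  obtain ⟨δ0, hδ0pos, hδ0abs⟩ :=
    exists_pos_setLIntegral_lt_of_measure_lt (μ := volume.restrict (Set.Icc (0 : ℝ) L))
      hfin (ε := ENNReal.ofReal (V / 4)) (by simp [ENNReal.ofReal_eq_zero]; linarith)
  set δ1 : ENNReal := min δ0 (ENNReal.ofReal (V / 16)) with hδ1def
  have hδ1pos : 0 < δ1 := lt_min hδ0pos (ENNReal.ofReal_pos.2 (by linarith))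
  have hδ1top : δ1 ≠ ⊤ := ((min_le_right _ _).trans_lt ENNReal.ofReal_lt_top).ne
  set c : ℝ := δ1.toReal with hcdef
  have hcpos : 0 < c := ENNReal.toReal_pos hδ1pos.ne' hδ1top
  have hcle : c ≤ V / 16 :=
    ENNReal.toReal_le_of_le_ofReal (by linarith) (min_le_right _ _)
  -- the key lower bound on μn
  have key : ∀ n, (∫ x in Set.Icc (0 : ℝ) L, |hn n x - h x|) < V / 8 →
      V / 2 < I n → lam n ≤ 1 → c ≤ μn n := by
    intro n hA hB hC
    by_contra hcon
    push_neg at hcon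
    have hMle : (volume (Hn n)).toReal ≤ μn n :=
      le_add_of_nonneg_right (mul_nonneg (one_div_nonneg.2 (hlam_pos n).le) (hJnonneg n))
    have hMlt : (volume (Hn n)).toReal < c := lt_of_le_of_lt hMle hcon
    have hvol : volume (Hn n) < δ0 := by
      have h1 : volume (Hn n) < δ1 := by
        rw [hcdef] at hMlt
        exact (ENNReal.toReal_lt_toReal (hHfin n) hδ1top).1 hMlt
      exact h1.trans_le (min_le_left _ _)
    have hrestrict : (volume.restrict (Set.Icc (0 : ℝ) L)) (Hn n) < δ0 := by
      rw [Measure.restrict_apply (hHmeas n)]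
      exact (measure_mono Set.inter_subset_left).trans_lt hvol
    have hlint := hδ0abs _ hrestrict
    have hre : (volume.restrict (Set.Icc (0 : ℝ) L)).restrict (Hn n) = volume.restrict (Hn n) := by
      rw [Measure.restrict_restrict (hHmeas n), Set.inter_eq_self_of_subset_left (hHsub n)]
    rw [hre] at hlint
    have hhH : (∫ x in Hn n, h x) < V / 4 := by
      have hnnIcc : 0 ≤ᵐ[volume.restrict (Set.Icc (0 : ℝ) L)] h :=
        (ae_restrict_iff' measurableSet_Icc).2 (ae_of_all _ hhnonneg)
      have hnn : 0 ≤ᵐ[volume.restrict (Hn n)] h :=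
        ae_restrict_of_ae_restrict_of_subset (hHsub n) hnnIcc
      have hmea : AEStronglyMeasurable h (volume.restrict (Hn n)) :=
        hhint.1.mono_measure (Measure.restrict_mono (hHsub n) le_rfl)
      rw [integral_eq_lintegral_of_nonneg_ae hnn hmea]
      exact ENNReal.toReal_lt_of_lt_ofReal hlint
    have hHn_int : IntegrableOn (hn n) (Hn n) := (hint n).mono_set (hHsub n)
    have hHh_int : IntegrableOn h (Hn n) := hhint.mono_set (hHsub n)
    have habs_int : IntegrableOn (fun x => |hn n x - h x|) (Set.Icc (0 : ℝ) L) :=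
      ((hint n).sub hhint).abs
    have h2 : (∫ x in Hn n, hn n x) ≤
        (∫ x in Hn n, h x) + ∫ x in Set.Icc (0 : ℝ) L, |hn n x - h x| := by
      have e1 : (∫ x in Hn n, (hn n x - h x)) ≤ ∫ x in Hn n, |hn n x - h x| :=
        integral_mono (hHn_int.sub hHh_int) (habs_int.mono_set (hHsub n))
          (fun x => le_abs_self _)
      have e2 : (∫ x in Hn n, |hn n x - h x|) ≤
          ∫ x in Set.Icc (0 : ℝ) L, |hn n x - h x| :=
        setIntegral_mono_set habs_int (ae_of_all _ fun x => abs_nonneg _)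
          (HasSubset.Subset.eventuallyLE (hHsub n))
      have e3 : (∫ x in Hn n, (hn n x - h x)) =
          (∫ x in Hn n, hn n x) - ∫ x in Hn n, h x := integral_sub hHn_int hHh_int
      linarith
    -- bound on the second part of μn
    set J : ℝ := ∫ x in Set.Icc (0 : ℝ) L \ Hn n, hn n x with hJdef
    have hinv : (1 / lam n) * J ≤ μn n := le_add_of_nonneg_left ENNReal.toReal_nonneg
    have hJle : J ≤ lam n * μn n := by
      have : J = lam n * ((1 / lam n) * J) := by
        field_simp
        exact (mul_div_cancel_right₀ J (hlam_pos n).ne').symm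
      rw [this]
      exact mul_le_mul_of_nonneg_left hinv (hlam_pos n).le
    have hJlt : J < c := by
      have : lam n * μn n ≤ μn n := by
        nlinarith [hμnonneg n, hlam_pos n]
      linarith
    have := hsplit n
    linarith
  -- eventual bounds
  have e1 : ∀ᶠ n in atTop, (∫ x in Set.Icc (0 : ℝ) L, |hn n x - h x|) < V / 8 :=
    hconv.eventually (gt_mem_nhds (by linarith))
  have e2 : ∀ᶠ n in atTop, V / 2 < I n :=
    hItend.eventually (lt_mem_nhds (by linarith))
  have e3 : ∀ᶠ n in atTop, lam n ≤ 1 := by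
    have h4 : ∀ᶠ n in atTop, V - I n < 1 := hδtend.eventually (gt_mem_nhds one_pos)
    filter_upwards [h4] with n h5
    exact Real.rpow_le_one (hδpos n).le h5.le hβ0.le
  have hev : ∀ᶠ n in atTop, c ≤ μn n := by
    filter_upwards [e1, e2, e3] with n h1 h2 h3 using key n h1 h2 h3
  refine ⟨hev.mono (fun n hn => lt_of_lt_of_le hcpos hn), ?_, ?_⟩
  · -- εn → 0
    refine squeeze_zero' ?_ ?_ (g := fun n => (V - I n) / c) ?_
    · filter_upwards [hev] with n h1
      exact div_nonneg (hδpos n).le (le_trans hcpos.le h1)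
    · filter_upwards [hev] with n h1
      exact div_le_div_of_nonneg_left (hδpos n).le hcpos h1
    · simpa using hδtend.div_const c
  · -- εn / lam → 0
    refine squeeze_zero' ?_ ?_ (g := fun n => ((V - I n) ^ (1 - β)) / c) ?_
    · filter_upwards [hev] with n h1
      exact div_nonneg (div_nonneg (hδpos n).le (le_trans hcpos.le h1)) (hlam_pos n).le
    · filter_upwards [hev] with n h1
      have heq : εn n / lam n = ((V - I n) ^ (1 - β)) / μn n := by
        show ((V - I n) / μn n) / lam n = ((V - I n) ^ (1 - β)) / μn n
        rw [div_right_comm]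
        congr 1
        rw [Real.rpow_sub (hδpos n), Real.rpow_one]
      rw [heq]
      exact div_le_div_of_nonneg_left (Real.rpow_nonneg (hδpos n).le _) hcpos h1
    · simpa using hδpow.div_const c
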